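/- arXiv:2009.12940 — 2 statements merged into one kernel-verified Lean document; each statement's English description precedes it below -/
import Mathlib

section
/- For nonzero x, x̃ ∈ ℝ³, one has ‖σ(x) - σ(x̃)‖² ≤ 2(|x|^{γ/2} + |x̃|^{γ/2})² |x - x̃|². -/
noncomputable def norm3 (x : Fin 3 → ℝ) : ℝ := Real.sqrt (∑ i, (x i)^2)

noncomputable def dot3 (x y : Fin 3 → ℝ) : ℝ := ∑ i, x i * y i

noncomputable def projM (x : Fin 3 → ℝ) : Matrix (Fin 3) (Fin 3) ℝ :=
  1 - (norm3 x ^ 2)⁻¹ • Matrix.of (fun i j => x i * x j)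

noncomputable def sigmaM (γ : ℝ) (x : Fin 3 → ℝ) : Matrix (Fin 3) (Fin 3) ℝ :=
  norm3 x ^ (1 + γ/2) • projM x

noncomputable def frob2 (A : Matrix (Fin 3) (Fin 3) ℝ) : ℝ := Matrix.trace (A * A.transpose)

noncomputable def minner (A B : Matrix (Fin 3) (Fin 3) ℝ) : ℝ := Matrix.trace (A * B.transpose)

noncomputable def bfun (γ : ℝ) (x : Fin 3 → ℝ) : Fin 3 → ℝ := (-2 * norm3 x ^ γ) • x

lemma sigmaM_eq (γ : ℝ) (x : Fin 3 → ℝ) :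
    sigmaM γ x = (norm3 x ^ (1 + γ/2)) • (1 : Matrix (Fin 3) (Fin 3) ℝ)
      - (norm3 x ^ (1 + γ/2) * (norm3 x ^ 2)⁻¹) • Matrix.of (fun i j => x i * x j) := by
  unfold sigmaM projM
  rw [smul_sub, smul_smul]

lemma frob2_expand (A B C E : ℝ) (x y : Fin 3 → ℝ) :
    frob2 ((A • (1:Matrix (Fin 3) (Fin 3) ℝ) - C • Matrix.of (fun i j => x i * x j))
         - (B • (1:Matrix (Fin 3) (Fin 3) ℝ) - E • Matrix.of (fun i j => y i * y j)))
    = 3*(A-B)^2 - 2*(A-B)*(C*(∑ i, (x i)^2) - E*(∑ i, (y i)^2))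
      + C^2*(∑ i, (x i)^2)^2 + E^2*(∑ i, (y i)^2)^2 - 2*C*E*(∑ i, x i * y i)^2 := by
  unfold frob2 Matrix.trace
  simp only [Matrix.sub_apply, Matrix.smul_apply, Matrix.one_apply, Matrix.of_apply,
    Matrix.transpose_apply, Matrix.mul_apply, Matrix.diag_apply, Fin.sum_univ_three,
    smul_eq_mul]
  norm_num [Fin.ext_iff]
  ring

lemma key2 (u v p q : ℝ) (hp : 0 ≤ p) (hq : 0 ≤ q) (hv : 0 ≤ v) (hvu : v ≤ u)
    (hqp : q ≤ p) (hpv : p*v ≤ q*u) : (u*p - v*q)^2 ≤ (p+q)^2*(u-v)^2 := by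
  have h2nd : 0 ≤ 2*p*u + q*u - p*v - 2*q*v := by
    nlinarith [mul_nonneg hp (sub_nonneg.2 hvu), mul_nonneg hq (sub_nonneg.2 hvu),
      mul_nonneg hv (sub_nonneg.2 hqp)]
  nlinarith [mul_nonneg (sub_nonneg.2 hpv) h2nd]

lemma scalar_main (u v p q D : ℝ) (hu : 0 < u) (hv : 0 < v) (hp : 0 < p) (hq : 0 < q)
    (hkey : (u*p - v*q)^2 ≤ (p+q)^2*(u-v)^2) (hD2 : D^2 ≤ (u*v)^2) :
    (u*p - v*q)^2 + (u*p)^2 + (v*q)^2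
      - 2*((u*p) * (v*q) * ((u^2)⁻¹ * (v^2)⁻¹) * D^2)
      ≤ 2*(p+q)^2*(u^2+v^2-2*D) := by
  have hw : (0:ℝ) < u*v := by positivity
  have hD : D ≤ u*v := by nlinarith
  have h3 : 2*((u*p) * (v*q) * ((u^2)⁻¹ * (v^2)⁻¹) * D^2) = 2*(p*q*D^2)/(u*v) := by
    field_simp
  rw [h3, sub_le_iff_le_add, ← sub_le_iff_le_add', le_div_iff₀ hw]
  have h1a : 0 ≤ p*q*(u*v - D) := mul_nonneg (mul_nonneg hp.le hq.le) (sub_nonneg.2 hD)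
  have h1b : 0 ≤ (u*v)*(p^2 + p*q + q^2) := by positivity
  have h1 : 0 ≤ (u*v - D) * (2*(p+q)^2*(u*v) - p*q*(D + u*v)) := by
    apply mul_nonneg (sub_nonneg.2 hD); nlinarith [h1a, h1b]
  have h2 : 0 ≤ (u*v) * ((p+q)^2*(u-v)^2 - (u*p - v*q)^2) :=
    mul_nonneg hw.le (sub_nonneg.2 hkey)
  nlinarith [h1, h2]

lemma hpv_lemma (α : ℝ) (hα : α ≤ 1) (u v : ℝ) (hv : 0 < v) (hvu : v ≤ u) :
    u ^ α * v ≤ v ^ α * u := by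
  have hu : 0 < u := lt_of_lt_of_le hv hvu
  have h := Real.rpow_le_rpow_of_nonpos hv hvu (by linarith : α - 1 ≤ 0)
  have e1 : u ^ (α-1) = u ^ α / u := by rw [Real.rpow_sub hu, Real.rpow_one]
  have e2 : v ^ (α-1) = v ^ α / v := by rw [Real.rpow_sub hv, Real.rpow_one]
  rw [e1, e2, div_le_div_iff₀ hu hv] at h
  linarith

lemma norm3_pos' {x : Fin 3 → ℝ} (hx : x ≠ 0) : 0 < norm3 x := by
  unfold norm3
  apply Real.sqrt_pos.2
  rcases (Function.ne_iff).1 hx with ⟨i, hi⟩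
  have : 0 < (x i)^2 := by apply sq_pos_of_ne_zero; exact hi
  calc (0:ℝ) < (x i)^2 := this
    _ ≤ ∑ j, (x j)^2 := Finset.single_le_sum (fun j _ => sq_nonneg (x j)) (Finset.mem_univ i)

lemma norm3_sq' (x : Fin 3 → ℝ) : norm3 x ^ 2 = ∑ i, (x i)^2 := by
  unfold norm3; rw [Real.sq_sqrt]; positivity

set_option maxHeartbeats 2000000 in
theorem stmt5 (γ : ℝ) (hγ : γ ∈ Set.Ioc (0:ℝ) 1) (x y : Fin 3 → ℝ) (hx : x ≠ 0) (hy : y ≠ 0) :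
    frob2 (sigmaM γ x - sigmaM γ y)
      ≤ 2 * (norm3 x ^ (γ/2) + norm3 y ^ (γ/2))^2 * norm3 (x - y) ^ 2 := by
  obtain ⟨hγ0, hγ1⟩ := hγ
  set u := norm3 x with hu_def
  set v := norm3 y with hv_def
  have hu : 0 < u := norm3_pos' hx
  have hv : 0 < v := norm3_pos' hy
  set p := u ^ (γ/2) with hp_def
  set q := v ^ (γ/2) with hq_def
  have hp : 0 < p := Real.rpow_pos_of_pos hu _
  have hq : 0 < q := Real.rpow_pos_of_pos hv _
  have hux : u ^ ((1:ℝ) + γ/2) = u * p := by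
    rw [hp_def, Real.rpow_add hu, Real.rpow_one]
  have huy : v ^ ((1:ℝ) + γ/2) = v * q := by
    rw [hq_def, Real.rpow_add hv, Real.rpow_one]
  have hsx : u^2 = x 0 ^ 2 + x 1 ^ 2 + x 2 ^ 2 := by
    rw [hu_def, norm3_sq', Fin.sum_univ_three]
  have hsy : v^2 = y 0 ^ 2 + y 1 ^ 2 + y 2 ^ 2 := by
    rw [hv_def, norm3_sq', Fin.sum_univ_three]
  set D := dot3 x y with hD_def
  have hDe : D = x 0 * y 0 + x 1 * y 1 + x 2 * y 2 := by
    rw [hD_def]; unfold dot3; rw [Fin.sum_univ_three]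
  have hD2 : D^2 ≤ (u*v)^2 := by
    rw [hDe]
    have : (u*v)^2 = (x 0 ^ 2 + x 1 ^ 2 + x 2 ^ 2) * (y 0 ^ 2 + y 1 ^ 2 + y 2 ^ 2) := by
      rw [mul_pow, hsx, hsy]
    rw [this]
    nlinarith [sq_nonneg (x 0 * y 1 - x 1 * y 0), sq_nonneg (x 0 * y 2 - x 2 * y 0),
      sq_nonneg (x 1 * y 2 - x 2 * y 1)]
  have hN : norm3 (x - y) ^ 2 = u^2 + v^2 - 2*D := by
    rw [norm3_sq', Fin.sum_univ_three]
    simp only [Pi.sub_apply]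
    rw [hDe]
    linear_combination -hsx - hsy
  have hE : frob2 (sigmaM γ x - sigmaM γ y)
      = (u*p - v*q)^2 + (u*p)^2 + (v*q)^2
        - 2*((u*p) * (v*q) * ((u^2)⁻¹ * (v^2)⁻¹) * D^2) := by
    rw [sigmaM_eq, sigmaM_eq, ← hu_def, ← hv_def, frob2_expand, hux, huy]
    rw [Fin.sum_univ_three, Fin.sum_univ_three, Fin.sum_univ_three, ← hsx, ← hsy, ← hDe]
    field_simp
    ring
  have hkey : (u*p - v*q)^2 ≤ (p+q)^2*(u-v)^2 := by
    rcases le_total v u with h | h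
    · have hqp : q ≤ p := Real.rpow_le_rpow hv.le h (by linarith)
      exact key2 u v p q hp.le hq.le hv.le h hqp (hpv_lemma (γ/2) (by linarith) u v hv h)
    · have hqp : p ≤ q := Real.rpow_le_rpow hu.le h (by linarith)
      have := key2 v u q p hq.le hp.le hu.le h hqp (hpv_lemma (γ/2) (by linarith) v u hu h)
      nlinarith [this]
  rw [hE, hN]
  calc (u*p - v*q)^2 + (u*p)^2 + (v*q)^2
        - 2*((u*p) * (v*q) * ((u^2)⁻¹ * (v^2)⁻¹) * D^2)
      ≤ 2*(p+q)^2*(u^2+v^2-2*D) := scalar_main u v p q D hu hv hp hq hkey hD2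
    _ = 2 * (p + q)^2 * (u^2 + v^2 - 2*D) := by ring
end

section
/- Fix γ ∈ (0,1] and p ≥ 2. There is a constant C = C(p,γ) such that for all v, v* ∈ ℝ³, setting x = v - v*, the quantity L(v,v*) := p|v|^{p-2} v·b(x) + (p/2)|v|^{p-2}‖σ(x)‖² + (p(p-2)/2)|v|^{p-4}|σ(x)v|² satisfies L(v,v*) ≤ -p|v|^{p+γ} + p|v|^p|v*|^γ + C p²(|v|^{p-2+γ}|v*|² + |v|^{p-2}|v*|^{2+γ}). -/
lemma n3_nonneg (x : Fin 3 → ℝ) : 0 ≤ norm3 x := Real.sqrt_nonneg _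

lemma n3_sq (x : Fin 3 → ℝ) : norm3 x ^ 2 = (x 0)^2 + (x 1)^2 + (x 2)^2 := by
  rw [norm3, Real.sq_sqrt (by positivity)]; simp [Fin.sum_univ_three]

lemma cs3 (x y : Fin 3 → ℝ) : dot3 x y ≤ norm3 x * norm3 y := by
  have hx := n3_sq x; have hy := n3_sq y
  have hxn := n3_nonneg x; have hyn := n3_nonneg y
  have h1 : (dot3 x y)^2 ≤ (norm3 x * norm3 y)^2 := by
    rw [mul_pow, hx, hy]
    simp only [dot3, Fin.sum_univ_three]
    nlinarith [sq_nonneg (x 0*y 1 - x 1*y 0), sq_nonneg (x 0*y 2 - x 2*y 0),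
      sq_nonneg (x 1*y 2 - x 2*y 1)]
  nlinarith [mul_nonneg hxn hyn]

lemma rpow_subadd {a b γ : ℝ} (ha : 0 ≤ a) (hb : 0 ≤ b) (h0 : 0 ≤ γ) (h1 : γ ≤ 1) :
    (a+b)^γ ≤ a^γ + b^γ := by
  have h := NNReal.rpow_add_le_add_rpow (⟨a,ha⟩ : NNReal) ⟨b,hb⟩ h0 h1
  have := NNReal.coe_le_coe.2 h
  push_cast [NNReal.coe_rpow] at this
  convert this using 2 <;> rfl

lemma proj_apply (x v : Fin 3 → ℝ) (i : Fin 3) :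
    (projM x).mulVec v i = v i - (norm3 x ^ 2)⁻¹ * (x i * dot3 x v) := by
  fin_cases i <;>
    simp [projM, Matrix.mulVec, dotProduct, dot3, Fin.sum_univ_three,
      Matrix.sub_apply, Matrix.smul_apply, Matrix.one_apply, Matrix.of_apply,
      smul_eq_mul] <;> ring

lemma zero_of_sumsq (x : Fin 3 → ℝ) (h : norm3 x ^ 2 = 0) :
    x 0 = 0 ∧ x 1 = 0 ∧ x 2 = 0 := by
  have hs := n3_sq x
  refine ⟨?_, ?_, ?_⟩ <;>
    nlinarith [sq_nonneg (x 0), sq_nonneg (x 1), sq_nonneg (x 2)]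

lemma proj_bound (x v : Fin 3 → ℝ) : norm3 ((projM x).mulVec v) ^ 2 ≤ norm3 v ^ 2 := by
  by_cases hS : norm3 x ^ 2 = 0
  · obtain ⟨h0, h1, h2⟩ := zero_of_sumsq x hS
    have hd : dot3 x v = 0 := by simp [dot3, Fin.sum_univ_three, h0, h1, h2]
    have : ∀ i, (projM x).mulVec v i = v i := by
      intro i; rw [proj_apply, hd]; ring
    rw [n3_sq, n3_sq v, this 0, this 1, this 2]
  · have hS' : 0 < norm3 x ^ 2 := lt_of_le_of_ne (by positivity) (Ne.symm hS)
    rw [n3_sq, n3_sq v]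
    simp only [proj_apply, dot3, Fin.sum_univ_three]
    rw [n3_sq x] at hS' ⊢
    have hSne : (x 0)^2 + (x 1)^2 + (x 2)^2 ≠ 0 := ne_of_gt hS'
    have key : 0 ≤ ((x 0)^2 + (x 1)^2 + (x 2)^2) * (x 0*v 0 + x 1*v 1 + x 2*v 2)^2 :=
      mul_nonneg hS'.le (sq_nonneg _)
    field_simp
    nlinarith [key]

lemma proj_sub (v vs : Fin 3 → ℝ) :
    (projM (v - vs)).mulVec v = (projM (v - vs)).mulVec vs := by
  funext i
  rw [proj_apply, proj_apply]
  by_cases hS : norm3 (v - vs) ^ 2 = 0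
  · obtain ⟨h0, h1, h2⟩ := zero_of_sumsq _ hS
    simp only [Pi.sub_apply] at h0 h1 h2
    have hv : ∀ j, v j = vs j := by
      intro j; fin_cases j <;> simp <;> linarith
    have : dot3 (v - vs) v = dot3 (v - vs) vs := by
      simp [dot3, Fin.sum_univ_three, Pi.sub_apply, hv 0, hv 1, hv 2]
    rw [this, hv i]
  · have hS' : 0 < norm3 (v - vs) ^ 2 := lt_of_le_of_ne (by positivity) (Ne.symm hS)
    have hs2 := n3_sq (v - vs)
    have hd : dot3 (v - vs) v = dot3 (v - vs) vs + norm3 (v - vs) ^ 2 := by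
      rw [hs2]; simp [dot3, Fin.sum_univ_three, Pi.sub_apply]; ring
    rw [hd]
    have hi : v i = vs i + (v - vs) i := by simp
    rw [hi]
    field_simp
    have hn : norm3 (v - vs) ≠ 0 := fun h => hS (by rw [h]; ring)
    have hn2 : norm3 (v - vs) ^ 2 * (norm3 (v - vs))⁻¹ ^ 2 = 1 := by
      rw [← mul_pow, mul_inv_cancel₀ hn, one_pow]
    linear_combination (-(v - vs) i) * hn2

lemma frob2_sigma (γ : ℝ) (x : Fin 3 → ℝ) (hS : norm3 x ^ 2 ≠ 0) :
    frob2 (sigmaM γ x) = 2 * (norm3 x ^ (1 + γ/2))^2 := by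
  have hS' : 0 < norm3 x ^ 2 := lt_of_le_of_ne (by positivity) (Ne.symm hS)
  have hs2 := n3_sq x
  simp only [frob2, sigmaM, projM, Matrix.trace, Matrix.diag, Matrix.mul_apply,
    Matrix.transpose_apply, Matrix.sub_apply, Matrix.smul_apply, Matrix.one_apply,
    Matrix.of_apply, smul_eq_mul, Fin.sum_univ_three]
  norm_num
  simp only [show ((0:Fin 3)=(2:Fin 3)) ↔ False from by decide,
    show ((2:Fin 3)=(0:Fin 3)) ↔ False from by decide,
    show ((1:Fin 3)=(2:Fin 3)) ↔ False from by decide,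
    show ((2:Fin 3)=(1:Fin 3)) ↔ False from by decide,
    show ((0:Fin 3)=(1:Fin 3)) ↔ False from by decide,
    show ((1:Fin 3)=(0:Fin 3)) ↔ False from by decide, if_false]
  norm_num
  rw [hs2] at hS' ⊢
  field_simp
  ring

set_option maxHeartbeats 1000000 in

set_option maxHeartbeats 1000000 in
theorem stmt14 (γ p : ℝ) (hγ : γ ∈ Set.Ioc (0:ℝ) 1) (hp : 2 ≤ p) :
    ∃ C > (0:ℝ), ∀ v vs : Fin 3 → ℝ,
      p * norm3 v ^ (p - 2) * dot3 v (bfun γ (v - vs))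
        + (p/2) * norm3 v ^ (p - 2) * frob2 (sigmaM γ (v - vs))
        + (p * (p - 2) / 2) * norm3 v ^ (p - 4) * norm3 ((sigmaM γ (v - vs)).mulVec v) ^ 2
      ≤ -p * norm3 v ^ (p + γ) + p * norm3 v ^ p * norm3 vs ^ γ
        + C * p^2 * (norm3 v ^ (p - 2 + γ) * norm3 vs ^ 2
            + norm3 v ^ (p - 2) * norm3 vs ^ (2 + γ)) := by
  obtain ⟨hγ0, hγ1⟩ := hγ
  have hp0 : (0:ℝ) < p := by linarith
  refine ⟨3, by norm_num, fun v vs => ?_⟩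
  have ha := n3_nonneg v
  have hs := n3_nonneg vs
  have hr := n3_nonneg (v - vs)
  have hA0 : 0 ≤ norm3 v ^ (p-2) := Real.rpow_nonneg ha _
  by_cases hS : norm3 (v - vs) ^ 2 = 0
  · -- degenerate case: v = vs
    obtain ⟨h0, h1, h2⟩ := zero_of_sumsq _ hS
    simp only [Pi.sub_apply] at h0 h1 h2
    have hveq : vs = v := by
      funext j; fin_cases j <;> simp <;> linarith
    rw [hveq]
    have hrz : norm3 (v - v) = 0 := by simp [norm3, sub_self]
    have hsig : sigmaM γ (v - v) = 0 := by
      rw [sigmaM, hrz, Real.zero_rpow (by positivity), zero_smul]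
    have hb : bfun γ (v - v) = 0 := by
      rw [bfun]; funext i; simp [sub_self]
    have h3 : dot3 v (0 : Fin 3 → ℝ) = 0 := by simp [dot3]
    have h4 : frob2 (0 : Matrix (Fin 3) (Fin 3) ℝ) = 0 := by simp [frob2]
    have h5 : norm3 ((0 : Matrix (Fin 3) (Fin 3) ℝ).mulVec v) = 0 := by
      rw [Matrix.zero_mulVec]; simp [norm3]
    rw [hsig, hb, h3, h4, h5]
    have hkp : norm3 v ^ (p+γ) = norm3 v ^ p * norm3 v ^ γ :=
      Real.rpow_add' ha (by intro h; linarith)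
    have hX : 0 ≤ norm3 v ^ (p-2+γ) * norm3 v ^ 2 + norm3 v ^ (p-2) * norm3 v ^ (2+γ) :=
      add_nonneg (mul_nonneg (Real.rpow_nonneg ha _) (sq_nonneg _))
        (mul_nonneg hA0 (Real.rpow_nonneg ha _))
    have h6 : 0 ≤ 3 * p^2 * (norm3 v ^ (p-2+γ) * norm3 v ^ 2 + norm3 v ^ (p-2) * norm3 v ^ (2+γ)) :=
      mul_nonneg (by positivity) hX
    rw [hkp]
    linarith [h6]
  · -- main case
    have hS' : 0 < norm3 (v - vs) ^ 2 := lt_of_le_of_ne (by positivity) (Ne.symm hS)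
    have hrpos : 0 < norm3 (v - vs) := by
      rcases hr.lt_or_eq with h | h
      · exact h
      · exfalso; rw [← h] at hS'; simp at hS'
    have hasq := n3_sq v
    have hssq := n3_sq vs
    have hrsq := n3_sq (v - vs)
    have hD := cs3 v vs
    have hDneg : -(dot3 v vs) ≤ norm3 v * norm3 vs := by
      have h1 := cs3 v (-vs)
      have h2 : dot3 v (-vs) = -dot3 v vs := by
        simp only [dot3, Fin.sum_univ_three, Pi.neg_apply]; ring
      have h3 : norm3 (-vs) = norm3 vs := by
        simp [norm3, Fin.sum_univ_three, Pi.neg_apply]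
      rw [h2, h3] at h1; exact h1
    have hr2 : norm3 (v - vs)^2 = norm3 v^2 - 2*dot3 v vs + norm3 vs^2 := by
      rw [hrsq, hasq, hssq]
      simp only [dot3, Fin.sum_univ_three, Pi.sub_apply]; ring
    have htri1sq : norm3 (v - vs)^2 ≤ (norm3 v + norm3 vs)^2 := by
      have : (norm3 v + norm3 vs)^2 = norm3 v^2 + 2*(norm3 v * norm3 vs) + norm3 vs^2 := by ring
      linarith [hDneg, hr2]
    have htri1 : norm3 (v - vs) ≤ norm3 v + norm3 vs := by
      have h := Real.sqrt_le_sqrt htri1sq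
      rwa [Real.sqrt_sq hr, Real.sqrt_sq (by linarith : (0:ℝ) ≤ norm3 v + norm3 vs)] at h
    have hDxle : dot3 (v - vs) vs ≤ norm3 (v - vs) * norm3 vs := cs3 _ vs
    have hDx2 : dot3 (v - vs) vs = dot3 v vs - norm3 vs ^ 2 := by
      rw [hssq]; simp only [dot3, Fin.sum_univ_three, Pi.sub_apply]; ring
    have htri2 : norm3 v ≤ norm3 (v - vs) + norm3 vs := by
      have h1 : norm3 v^2 ≤ (norm3 (v - vs) + norm3 vs)^2 := by
        have : (norm3 (v - vs) + norm3 vs)^2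
            = norm3 (v - vs)^2 + 2*(norm3 (v - vs) * norm3 vs) + norm3 vs^2 := by ring
        linarith [hDxle, hDx2, hr2]
      have h := Real.sqrt_le_sqrt h1
      rwa [Real.sqrt_sq ha, Real.sqrt_sq (by linarith : (0:ℝ) ≤ norm3 (v - vs) + norm3 vs)] at h
    have hsub2 : norm3 (v-vs) ^ γ ≤ norm3 v ^ γ + norm3 vs ^ γ :=
      le_trans (Real.rpow_le_rpow hr htri1 hγ0.le) (rpow_subadd ha hs hγ0.le hγ1)
    have hsub1 : norm3 v ^ γ ≤ norm3 (v-vs) ^ γ + norm3 vs ^ γ :=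
      le_trans (Real.rpow_le_rpow ha htri2 hγ0.le) (rpow_subadd hr hs hγ0.le hγ1)
    have hB : dot3 v (bfun γ (v - vs)) = -2 * norm3 (v-vs) ^ γ * dot3 v (v - vs) := by
      simp only [bfun, dot3, Fin.sum_univ_three, Pi.smul_apply, smul_eq_mul]; ring
    have hvx : dot3 v (v - vs) = norm3 v ^ 2 - dot3 v vs := by
      rw [hasq]; simp only [dot3, Fin.sum_univ_three, Pi.sub_apply]; ring
    have hF : frob2 (sigmaM γ (v-vs)) = 2 * (norm3 (v-vs) ^ (1+γ/2))^2 := frob2_sigma γ _ hS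
    have hc2 : (norm3 (v-vs) ^ (1+γ/2))^2 = norm3 (v-vs) ^ γ * norm3 (v-vs) ^ 2 := by
      rw [← Real.rpow_two, ← Real.rpow_mul hr,
        show (1+γ/2)*(2:ℝ) = γ + 2 by ring, Real.rpow_add hrpos, Real.rpow_two]
    have hG0 : 0 ≤ norm3 (v-vs) ^ γ := Real.rpow_nonneg hr γ
    -- the W term
    have hsmul : (sigmaM γ (v-vs)).mulVec v
        = (norm3 (v-vs) ^ (1+γ/2)) • ((projM (v-vs)).mulVec v) := by
      rw [sigmaM, Matrix.smul_mulVec]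
    have hWsplit : norm3 ((sigmaM γ (v-vs)).mulVec v) ^ 2
        = (norm3 (v-vs) ^ (1+γ/2))^2 * norm3 ((projM (v-vs)).mulVec v) ^ 2 := by
      rw [hsmul, n3_sq, n3_sq ((projM (v-vs)).mulVec v)]
      simp only [Pi.smul_apply, smul_eq_mul]; ring
    have hWa : norm3 ((projM (v-vs)).mulVec v) ^ 2 ≤ norm3 v ^ 2 := proj_bound _ v
    have hWs : norm3 ((projM (v-vs)).mulVec v) ^ 2 ≤ norm3 vs ^ 2 := by
      rw [proj_sub v vs]; exact proj_bound _ vs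
    have hW0 : 0 ≤ norm3 ((projM (v-vs)).mulVec v) ^ 2 := sq_nonneg _
    have hWas : norm3 ((projM (v-vs)).mulVec v) ^ 2 ≤ norm3 v * norm3 vs := by
      rcases le_total (norm3 v) (norm3 vs) with h | h
      · calc norm3 ((projM (v-vs)).mulVec v) ^ 2 ≤ norm3 v ^ 2 := hWa
          _ = norm3 v * norm3 v := sq (norm3 v) ▸ (sq (norm3 v)).symm ▸ (pow_two (norm3 v))
          _ ≤ norm3 v * norm3 vs := mul_le_mul_of_nonneg_left h ha
      · calc norm3 ((projM (v-vs)).mulVec v) ^ 2 ≤ norm3 vs ^ 2 := hWs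
          _ = norm3 vs * norm3 vs := pow_two (norm3 vs)
          _ ≤ norm3 v * norm3 vs := mul_le_mul_of_nonneg_right h hs
    have hW4 : norm3 ((projM (v-vs)).mulVec v)^2 * norm3 (v-vs)^2
        ≤ 4 * (norm3 v^2 * norm3 vs^2) := by
      have e2 := mul_le_mul_of_nonneg_left htri1sq hW0
      have f1 := mul_le_mul_of_nonneg_left hWs (sq_nonneg (norm3 v))
      have f2 := mul_le_mul_of_nonneg_left hWa (sq_nonneg (norm3 vs))
      have f3 := mul_le_mul_of_nonneg_left hWas
        (mul_nonneg (by norm_num : (0:ℝ) ≤ 2) (mul_nonneg ha hs))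
      linarith [e2, f1, f2, f3]
    have hT : norm3 ((sigmaM γ (v-vs)).mulVec v)^2
        ≤ norm3 (v-vs)^γ * (4*(norm3 v^2 * norm3 vs^2)) := by
      rw [hWsplit, hc2]
      have := mul_le_mul_of_nonneg_left hW4 hG0
      linarith [this]
    -- third term bound
    have h3 : (p*(p-2)/2) * norm3 v ^ (p-4) * norm3 ((sigmaM γ (v-vs)).mulVec v)^2
        ≤ 2*p*(p-2) * (norm3 (v-vs)^γ * (norm3 v ^(p-2) * norm3 vs^2)) := by
      rcases eq_or_lt_of_le hp with hp2 | hp2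
      · rw [← hp2]; norm_num
      · have hp4 : 0 ≤ norm3 v ^ (p-4) := Real.rpow_nonneg ha _
        have hco : 0 ≤ p*(p-2)/2 * norm3 v ^(p-4) :=
          mul_nonneg (div_nonneg (mul_nonneg hp0.le (by linarith)) (by norm_num)) hp4
        have step := mul_le_mul_of_nonneg_left hT hco
        have hpow2 : norm3 v ^ (p-2) = norm3 v ^ (p-4) * norm3 v ^ 2 := by
          rw [← Real.rpow_two, ← Real.rpow_add' ha (show p-4+2 ≠ 0 by intro h; linarith)]
          congr 1; ring
        have heq : (p*(p-2)/2 * norm3 v^(p-4)) * (norm3 (v-vs)^γ * (4*(norm3 v^2*norm3 vs^2)))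
            = 2*p*(p-2)*(norm3 (v-vs)^γ*(norm3 v^(p-2)*norm3 vs^2)) := by
          rw [hpow2]; ring
        linarith [step, heq]
    -- power rewrites
    have e_p : norm3 v ^ p = norm3 v ^ (p-2) * norm3 v ^ 2 := by
      rw [← Real.rpow_two, ← Real.rpow_add' ha (show p-2+2 ≠ 0 by intro h; linarith)]
      congr 1; ring
    have e_pγ : norm3 v ^ (p+γ) = norm3 v ^ p * norm3 v ^ γ :=
      Real.rpow_add' ha (by intro h; linarith)
    have e_aγ : norm3 v ^ (p-2+γ) = norm3 v ^ (p-2) * norm3 v ^ γ :=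
      Real.rpow_add' ha (by intro h; linarith)
    have e_sγ : norm3 vs ^ ((2:ℝ)+γ) = norm3 vs ^ 2 * norm3 vs ^ γ := by
      rw [Real.rpow_add' hs (show (2:ℝ)+γ ≠ 0 by intro h; linarith), Real.rpow_two]
    rw [hB, hvx, hF, hc2, e_pγ, e_p, e_aγ, e_sγ]
    -- final linear assembly
    have hr2m : p * (norm3 v^(p-2)) * (norm3 (v-vs)^γ) * (norm3 (v-vs)^2)
        = p*(norm3 v^(p-2))*(norm3 (v-vs)^γ)*(norm3 v^2 - 2*dot3 v vs + norm3 vs^2) := by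
      rw [hr2]
    have h_neg := mul_le_mul_of_nonneg_left hsub1
      (mul_nonneg hp0.le (mul_nonneg hA0 (sq_nonneg (norm3 v))))
    have h_pos := mul_le_mul_of_nonneg_left hsub2
      (mul_nonneg (show (0:ℝ) ≤ p + 2*p*(p-2) by
          have h1 : 0 ≤ 2*p*(p-2) := mul_nonneg (mul_nonneg (by norm_num) hp0.le) (by linarith)
          linarith)
        (mul_nonneg hA0 (sq_nonneg (norm3 vs))))
    have h_coeff := mul_le_mul_of_nonneg_right
      (show p + 2*p*(p-2) ≤ 3*p^2 by linarith [sq_nonneg p])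
      (show 0 ≤ norm3 v^(p-2)*norm3 v^γ*norm3 vs^2 + norm3 v^(p-2)*(norm3 vs^2*norm3 vs^γ) from
        add_nonneg (mul_nonneg (mul_nonneg hA0 (Real.rpow_nonneg ha _)) (sq_nonneg _))
          (mul_nonneg hA0 (mul_nonneg (sq_nonneg _) (Real.rpow_nonneg hs _))))
    linarith [h3, hr2m, h_neg, h_pos, h_coeff]
end
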